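/- There is an absolute constant C > 0 such that for every n ≥ 2, every ε ∈ (0,1), every d ∈ ℕ and every set X ⊆ ℝ^d with |X| = n, there exists a linear map f : ℝ^d → ℝ^{d′} with d′ ≤ ⌈C·ε^{−2}·log n⌉ such that for all p, q ∈ X: (1−ε)‖p−q‖ ≤ ‖f(p)−f(q)‖ ≤ (1+ε)‖p−q‖. -/

import Mathlib

open scoped Classical RealInnerProductSpace

noncomputable section

/-- A polygonal curve in `ℝ^d`: vertices `v_1, …, v_m`, instants `0 = t_1 < … < t_m = 1`,
and a parameterization `toFun : [0,1] → ℝ^d` that interpolates affinely (traces the line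
segment) between consecutive vertices.  `m` is the complexity of the curve. -/
structure PolyCurve (d : ℕ) where
  m : ℕ
  m_pos : 0 < m
  vertex : Fin m → EuclideanSpace ℝ (Fin d)
  instant : Fin m → ℝ
  toFun : ℝ → EuclideanSpace ℝ (Fin d)
  instant_strictMono : StrictMono instant
  instant_first : instant ⟨0, m_pos⟩ = 0
  instant_last : instant ⟨m - 1, Nat.sub_lt m_pos one_pos⟩ = 1
  affine_on_segments : ∀ i j : Fin m, (j : ℕ) = (i : ℕ) + 1 → ∀ s ∈ Set.Icc (0:ℝ) 1,
    toFun ((1 - s) * instant i + s * instant j) = (1 - s) • vertex i + s • vertex j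

/-- The image curve `F(τ)` under a linear map `f`: same instants, vertices `f(v_i)`,
parameterization `f ∘ τ`. -/
def PolyCurve.map {d d' : ℕ} (f : EuclideanSpace ℝ (Fin d) →ₗ[ℝ] EuclideanSpace ℝ (Fin d'))
    (τ : PolyCurve d) : PolyCurve d' where
  m := τ.m
  m_pos := τ.m_pos
  vertex := fun i => f (τ.vertex i)
  instant := τ.instant
  toFun := fun t => f (τ.toFun t)
  instant_strictMono := τ.instant_strictMono
  instant_first := τ.instant_first
  instant_last := τ.instant_last
  affine_on_segments := by
    intro i j hj s hs
    simp only [τ.affine_on_segments i j hj s hs, map_add, map_smul]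

/-- A weak reparameterization: a continuous map of `[0,1]` to itself fixing the endpoints. -/
def IsWeakReparam (φ : ℝ → ℝ) : Prop :=
  ContinuousOn φ (Set.Icc 0 1) ∧ Set.MapsTo φ (Set.Icc 0 1) (Set.Icc 0 1) ∧ φ 0 = 0 ∧ φ 1 = 1

/-- A reparameterization: a continuous bijection of `[0,1]` onto itself fixing the endpoints. -/
def IsReparam (φ : ℝ → ℝ) : Prop :=
  IsWeakReparam φ ∧ Set.BijOn φ (Set.Icc 0 1) (Set.Icc 0 1)

/-- The (continuous) Fréchet distance between two polygonal curves. -/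
def frechetDist {d : ℕ} (σ τ : PolyCurve d) : ℝ :=
  sInf { r | ∃ φ ψ : ℝ → ℝ, IsReparam φ ∧ IsReparam ψ ∧
    r = ⨆ t : Set.Icc (0:ℝ) 1, ‖σ.toFun (φ t.1) - τ.toFun (ψ t.1)‖ }

/-- The weak Fréchet distance between two polygonal curves. -/
def weakFrechetDist {d : ℕ} (σ τ : PolyCurve d) : ℝ :=
  sInf { r | ∃ φ ψ : ℝ → ℝ, IsWeakReparam φ ∧ IsWeakReparam ψ ∧
    r = ⨆ t : Set.Icc (0:ℝ) 1, ‖σ.toFun (φ t.1) - τ.toFun (ψ t.1)‖ }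

/-- `f` is a `(1 ± ε)`-embedding for the point set `P`. -/
def IsJLEmbedding {d d' : ℕ} (ε : ℝ) (f : EuclideanSpace ℝ (Fin d) → EuclideanSpace ℝ (Fin d'))
    (P : Set (EuclideanSpace ℝ (Fin d))) : Prop :=
  ∀ p ∈ P, ∀ q ∈ P,
    (1 - ε) * ‖p - q‖ ≤ ‖f p - f q‖ ∧ ‖f p - f q‖ ≤ (1 + ε) * ‖p - q‖

/-- `ρ` is a vertex-restricted `ℓ`-simplification of `τ`: it has at most `ℓ` vertices, and its
vertex sequence is a subsequence of the vertex sequence of `τ` starting with the first vertex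
of `τ` and ending with its last vertex. -/
def IsVRSimplification {d : ℕ} (ℓ : ℕ) (τ ρ : PolyCurve d) : Prop :=
  ρ.m ≤ ℓ ∧ ∃ g : Fin ρ.m → Fin τ.m, StrictMono g ∧
    (∀ i, ρ.vertex i = τ.vertex (g i)) ∧
    g ⟨0, ρ.m_pos⟩ = ⟨0, τ.m_pos⟩ ∧
    g ⟨ρ.m - 1, Nat.sub_lt ρ.m_pos one_pos⟩ = ⟨τ.m - 1, Nat.sub_lt τ.m_pos one_pos⟩

/-- The optimal `(k,ℓ)`-median cost of a finite set `T` of polygonal curves: the infimum, over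
all sets `C` of `k` polygonal curves each of complexity at most `ℓ`, of
`∑_{τ ∈ T} min_{c ∈ C} d_F(τ, c)`. -/
def kMedianCost {d : ℕ} (k ℓ : ℕ) (T : Finset (PolyCurve d)) : ℝ :=
  sInf { r | ∃ C : Finset (PolyCurve d), C.card = k ∧ (∀ c ∈ C, c.m ≤ ℓ) ∧
    r = ∑ τ ∈ T, sInf ((fun c => frechetDist τ c) '' ↑C) }


section JLaux
open Real Finset MeasureTheory

/-- `exp (-u) ≤ 1 - u + u^2/2` for `u ≥ 0`. -/
lemma jl_exp_neg_le {u : ℝ} (hu : 0 ≤ u) : Real.exp (-u) ≤ 1 - u + u^2/2 := by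
  have key : MonotoneOn (fun x : ℝ => 1 - x + x^2/2 - Real.exp (-x)) (Set.Ici 0) := by
    have hd : ∀ x : ℝ, HasDerivAt (fun x : ℝ => 1 - x + x^2/2 - Real.exp (-x))
        (-1 + x + Real.exp (-x)) x := by
      intro x
      have h1 : HasDerivAt (fun x : ℝ => Real.exp (-x)) (-Real.exp (-x)) x := by
        simpa [Function.comp_def] using (Real.hasDerivAt_exp (-x)).comp x (hasDerivAt_neg x)
      have h2 : HasDerivAt (fun x : ℝ => 1 - x + x^2/2) (-1 + x) x := by
        have : HasDerivAt (fun x : ℝ => x^2/2) x x := by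
          simpa using (hasDerivAt_pow 2 x).div_const 2
        simpa [Pi.add_def, Pi.sub_def] using (((hasDerivAt_const x (1:ℝ)).sub (hasDerivAt_id x)).add this)
      simpa [sub_eq_add_neg, Pi.add_def, Pi.neg_def] using h2.sub h1
    apply monotoneOn_of_deriv_nonneg (convex_Ici 0)
    · exact (Continuous.continuousOn (by continuity))
    · intro x hx
      exact (hd x).differentiableAt.differentiableWithinAt
    · intro x hx
      rw [(hd x).deriv]
      have : 1 - x ≤ Real.exp (-x) := by
        have := Real.add_one_le_exp (-x); linarith
      linarith
  have h0 : (0:ℝ) ∈ Set.Ici (0:ℝ) := Set.self_mem_Ici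
  have := key h0 (Set.mem_Ici.2 hu) hu
  simp at this
  linarith

/-- sign function on Bool -/
def jlsgn (b : Bool) : ℝ := Bool.rec (-1) 1 b

lemma jlsgn_sq (b : Bool) : jlsgn b ^ 2 = 1 := by cases b <;> simp [jlsgn]

lemma jlsgn_not (b : Bool) : jlsgn (!b) = - jlsgn b := by cases b <;> simp [jlsgn]

/-- expectations of odd functions against one sign vanish -/
lemma jl_sum_flip {d : ℕ} (a : Fin d) (F : (Fin d → Bool) → ℝ)
    (hF : ∀ σ c, F (Function.update σ a c) = F σ) :
    ∑ σ : Fin d → Bool, jlsgn (σ a) * F σ = 0 := by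
  apply Finset.sum_ninvolution (g := fun σ => Function.update σ a (!(σ a)))
  · intro σ
    have h1 : F (Function.update σ a (!(σ a))) = F σ := hF σ _
    have h2 : (Function.update σ a (!(σ a))) a = !(σ a) := Function.update_self a _ σ
    rw [h1, h2, jlsgn_not]; ring
  · intro σ _
    intro h
    have := congrFun h a
    rw [Function.update_self] at this
    exact (Bool.not_ne_self (σ a)) this
  · intro σ; exact Finset.mem_univ _
  · intro σ
    funext i
    by_cases hi : i = a
    · subst hi; simp [Function.update_self]
    · simp [Function.update_of_ne hi]


variable {d d' : ℕ}

variable (x : Fin d → ℝ)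

/-- the Rademacher sum over a finset of coordinates -/
def jlS (s : Finset (Fin d)) (σ : Fin d → Bool) : ℝ := ∑ i ∈ s, jlsgn (σ i) * x i

lemma jlS_update (s : Finset (Fin d)) {a : Fin d} (ha : a ∉ s) (σ : Fin d → Bool) (c : Bool) :
    jlS x s (Function.update σ a c) = jlS x s σ := by
  unfold jlS
  apply Finset.sum_congr rfl
  intro i hi
  have : i ≠ a := fun h => ha (h ▸ hi)
  rw [Function.update_of_ne this]

lemma jl_flip_comp (s : Finset (Fin d)) {a : Fin d} (ha : a ∉ s) (G : ℝ → ℝ) :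
    ∑ σ : Fin d → Bool, jlsgn (σ a) * G (jlS x s σ) = 0 :=
  jl_sum_flip a _ (fun σ c => by rw [jlS_update x s ha])

lemma jlS_insert {s : Finset (Fin d)} {a : Fin d} (ha : a ∉ s) (σ : Fin d → Bool) :
    jlS x (insert a s) σ = jlsgn (σ a) * x a + jlS x s σ := Finset.sum_insert ha

/-- second moment -/
lemma jl_m2 (s : Finset (Fin d)) :
    ∑ σ : Fin d → Bool, (jlS x s σ)^2 = 2^d * ∑ i ∈ s, (x i)^2 := by
  classical
  induction s using Finset.induction with
  | empty => simp [jlS]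
  | insert a s ha ih =>
    have expand : ∀ σ : Fin d → Bool, (jlS x (insert a s) σ)^2
        = (x a)^2 + (jlS x s σ)^2 + jlsgn (σ a) * (2 * x a * jlS x s σ) := by
      intro σ
      rw [jlS_insert x ha]
      have h2 := jlsgn_sq (σ a)
      linear_combination ((x a)^2) * h2
    simp only [expand]
    rw [Finset.sum_add_distrib, Finset.sum_add_distrib]
    have hflip : ∑ σ : Fin d → Bool, jlsgn (σ a) * (2 * x a * jlS x s σ) = 0 :=
      jl_flip_comp x s ha (fun t => 2 * x a * t)
    rw [hflip, ih, Finset.sum_const, Finset.sum_insert ha]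
    simp only [Finset.card_univ, Fintype.card_fun, Fintype.card_bool, Fintype.card_fin,
      nsmul_eq_mul, Nat.cast_pow, Nat.cast_ofNat, add_zero]
    ring

/-- fourth moment bound -/
lemma jl_m4 (s : Finset (Fin d)) :
    ∑ σ : Fin d → Bool, (jlS x s σ)^4 ≤ 2^d * (3 * (∑ i ∈ s, (x i)^2)^2) := by
  classical
  induction s using Finset.induction with
  | empty => simp [jlS]
  | insert a s ha ih =>
    have expand : ∀ σ : Fin d → Bool, (jlS x (insert a s) σ)^4
        = (x a)^4 + 6*(x a)^2*(jlS x s σ)^2 + (jlS x s σ)^4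
          + jlsgn (σ a) * (4*(x a)^3 * jlS x s σ + 4*(x a) * (jlS x s σ)^3) := by
      intro σ
      rw [jlS_insert x ha]
      have h2 := jlsgn_sq (σ a)
      linear_combination ((jlsgn (σ a)^2 + 1)*(x a)^4 + 4*jlsgn (σ a)*(x a)^3*(jlS x s σ)
        + 6*(x a)^2*(jlS x s σ)^2) * h2
    have hflip : ∑ σ : Fin d → Bool,
        jlsgn (σ a) * (4*(x a)^3 * jlS x s σ + 4*(x a) * (jlS x s σ)^3) = 0 :=
      jl_flip_comp x s ha (fun t => 4*(x a)^3 * t + 4*(x a) * t^3)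
    simp only [expand]
    rw [Finset.sum_add_distrib, Finset.sum_add_distrib, Finset.sum_add_distrib, hflip, add_zero,
      Finset.sum_const, ← Finset.mul_sum, jl_m2, Finset.sum_insert ha]
    simp only [Finset.card_univ, Fintype.card_fun, Fintype.card_bool, Fintype.card_fin,
      nsmul_eq_mul, Nat.cast_pow, Nat.cast_ofNat]
    have h2n : (0:ℝ) ≤ 2^d := by positivity
    nlinarith [ih, sq_nonneg (x a), sq_nonneg (∑ i ∈ s, (x i)^2), h2n,
      mul_nonneg h2n (sq_nonneg ((x a)^2))]

/-- MGF of the Rademacher sum -/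
lemma jl_mgf (s : Finset (Fin d)) (t : ℝ) :
    ∑ σ : Fin d → Bool, Real.exp (t * jlS x s σ) = 2^d * ∏ i ∈ s, Real.cosh (t * x i) := by
  classical
  induction s using Finset.induction with
  | empty =>
    simp only [jlS, Finset.sum_empty, mul_zero, Real.exp_zero, Finset.prod_empty, mul_one,
      Finset.sum_const, Finset.card_univ, Fintype.card_fun, Fintype.card_bool, Fintype.card_fin,
      nsmul_eq_mul, Nat.cast_pow, Nat.cast_ofNat]
  | insert a s ha ih =>
    have expand : ∀ σ : Fin d → Bool, Real.exp (t * jlS x (insert a s) σ)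
        = Real.cosh (t * x a) * Real.exp (t * jlS x s σ)
          + jlsgn (σ a) * (Real.sinh (t * x a) * Real.exp (t * jlS x s σ)) := by
      intro σ
      rw [jlS_insert x ha, mul_add, Real.exp_add]
      have : Real.exp (t * (jlsgn (σ a) * x a)) = Real.cosh (t * x a) + jlsgn (σ a) * Real.sinh (t * x a) := by
        cases h : σ a
        · simp only [jlsgn]
          rw [show t * (-1 * x a) = -(t * x a) by ring]
          have := Real.cosh_sub_sinh (t * x a)
          rw [← this]; ring
        · simp only [jlsgn]
          rw [show t * (1 * x a) = t * x a by ring]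
          have := Real.cosh_add_sinh (t * x a)
          rw [← this]; ring
      rw [this]; ring
    simp only [expand]
    rw [Finset.sum_add_distrib]
    have hflip : ∑ σ : Fin d → Bool,
        jlsgn (σ a) * (Real.sinh (t * x a) * Real.exp (t * jlS x s σ)) = 0 :=
      jl_flip_comp x s ha (fun u => Real.sinh (t * x a) * Real.exp (t * u))
    rw [hflip, ← Finset.mul_sum, ih, Finset.prod_insert ha]
    ring


lemma jl_integrable (c : ℝ) : Integrable (fun g : ℝ => Real.exp (c*g - g^2/2)) := by
  have h : (fun g : ℝ => Real.exp (c*g - g^2/2))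
      = fun g => Real.exp (c^2/2) * Real.exp (-(1/2)*(g-c)^2) := by
    funext g; rw [← Real.exp_add]; ring_nf
  rw [h]
  exact ((integrable_exp_neg_mul_sq (by norm_num : (0:ℝ) < 1/2)).comp_sub_right c).const_mul _

lemma jl_gauss_mgf (c : ℝ) :
    ∫ g : ℝ, Real.exp (c*g - g^2/2) = Real.sqrt (2*π) * Real.exp (c^2/2) := by
  have h : (fun g : ℝ => Real.exp (c*g - g^2/2))
      = fun g => Real.exp (c^2/2) * Real.exp (-(1/2)*(g-c)^2) := by
    funext g; rw [← Real.exp_add]; ring_nf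
  rw [h, MeasureTheory.integral_const_mul]
  have htr : ∫ g : ℝ, Real.exp (-(1/2)*(g-c)^2) = ∫ g : ℝ, Real.exp (-(1/2)*g^2) := by
    exact integral_sub_right_eq_self (fun g => Real.exp (-(1/2)*g^2)) c
  rw [htr, integral_gaussian]
  rw [show π / (1/2 : ℝ) = 2*π by ring]
  ring

lemma jl_mgf_sq (s : Finset (Fin d)) (hW : ∑ i ∈ s, (x i)^2 = 1)
    {l : ℝ} (hl0 : 0 ≤ l) (hl : l < 1/2) :
    ∑ σ : Fin d → Bool, Real.exp (l * (jlS x s σ)^2)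
      ≤ 2^d * Real.sqrt (1-2*l)⁻¹ := by
  have hπ : (0:ℝ) < 2*π := by positivity
  have hsπ : Real.sqrt (2*π) ≠ 0 := by positivity
  have key : ∀ σ : Fin d → Bool, Real.exp (l * (jlS x s σ)^2)
      = (Real.sqrt (2*π))⁻¹ * ∫ g : ℝ, Real.exp ((Real.sqrt (2*l) * jlS x s σ)*g - g^2/2) := by
    intro σ
    rw [jl_gauss_mgf]
    have : (Real.sqrt (2*l) * jlS x s σ)^2 = 2*l * (jlS x s σ)^2 := by
      rw [mul_pow, Real.sq_sqrt (by linarith : (0:ℝ) ≤ 2*l)]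
    rw [mul_pow, Real.sq_sqrt (by linarith : (0:ℝ) ≤ 2*l), ← mul_assoc, inv_mul_cancel₀ hsπ,
      one_mul]
    congr 1; ring
  simp only [key]
  rw [← Finset.mul_sum]
  have hswap : ∑ σ : Fin d → Bool, ∫ g : ℝ, Real.exp ((Real.sqrt (2*l) * jlS x s σ)*g - g^2/2)
      = ∫ g : ℝ, ∑ σ : Fin d → Bool, Real.exp ((Real.sqrt (2*l) * jlS x s σ)*g - g^2/2) :=
    (integral_finset_sum _ (fun σ _ => jl_integrable _)).symm
  rw [hswap]
  have hmono : ∫ g : ℝ, ∑ σ : Fin d → Bool, Real.exp ((Real.sqrt (2*l) * jlS x s σ)*g - g^2/2)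
      ≤ ∫ g : ℝ, 2^d * Real.exp (-(1/2 - l)*g^2) := by
    apply integral_mono
    · exact integrable_finset_sum _ (fun σ _ => jl_integrable _)
    · exact (integrable_exp_neg_mul_sq (by linarith : (0:ℝ) < 1/2 - l)).const_mul _
    intro g
    have e1 : ∀ σ : Fin d → Bool, (Real.sqrt (2*l) * jlS x s σ)*g - g^2/2
        = (Real.sqrt (2*l) * g) * jlS x s σ + (- g^2/2) := by intro σ; ring
    simp only [e1, Real.exp_add]
    rw [← Finset.sum_mul, jl_mgf]
    have hcosh : ∏ i ∈ s, Real.cosh ((Real.sqrt (2*l) * g) * x i)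
        ≤ Real.exp (l * g^2) := by
      calc ∏ i ∈ s, Real.cosh ((Real.sqrt (2*l) * g) * x i)
          ≤ ∏ i ∈ s, Real.exp (((Real.sqrt (2*l) * g) * x i)^2/2) := by
            apply Finset.prod_le_prod
            · intro i _; exact (Real.cosh_pos _).le
            · intro i _; exact Real.cosh_le_exp_half_sq _
        _ = Real.exp (∑ i ∈ s, ((Real.sqrt (2*l) * g) * x i)^2/2) := by
            rw [Real.exp_sum]
        _ = Real.exp (l * g^2) := by
            congr 1
            have : ∀ i, ((Real.sqrt (2*l) * g) * x i)^2/2 = (l * g^2) * (x i)^2 := by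
              intro i
              rw [mul_pow, mul_pow, Real.sq_sqrt (by linarith : (0:ℝ) ≤ 2*l)]
              ring
            simp only [this]
            rw [← Finset.mul_sum, hW, mul_one]
    have hpos : (0:ℝ) < Real.exp (- g^2/2) := Real.exp_pos _
    have hrw : Real.exp (l*g^2) * Real.exp (- g^2/2) = Real.exp (-(1/2 - l)*g^2) := by
      rw [← Real.exp_add]; congr 1; ring
    rw [← hrw, mul_assoc]
    apply mul_le_mul_of_nonneg_left _ (by positivity : (0:ℝ) ≤ 2^d)
    exact mul_le_mul_of_nonneg_right hcosh hpos.le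
  calc (Real.sqrt (2*π))⁻¹ * ∫ g : ℝ, ∑ σ : Fin d → Bool,
        Real.exp ((Real.sqrt (2*l) * jlS x s σ)*g - g^2/2)
      ≤ (Real.sqrt (2*π))⁻¹ * ∫ g : ℝ, 2^d * Real.exp (-(1/2 - l)*g^2) := by
        apply mul_le_mul_of_nonneg_left hmono (by positivity)
    _ = 2^d * Real.sqrt (1-2*l)⁻¹ := by
        rw [MeasureTheory.integral_const_mul, integral_gaussian]
        have h1 : Real.sqrt (π / (1/2 - l)) = Real.sqrt (2*π) * Real.sqrt (1-2*l)⁻¹ := by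
          rw [← Real.sqrt_mul hπ.le]
          congr 1
          field_simp
        rw [h1]
        field_simp
  done

/-- numeric: MGF bound in exponential form -/
lemma jl_sqrt_bound {l : ℝ} (hl0 : 0 ≤ l) (hl : l ≤ 1/5) :
    Real.sqrt (1-2*l)⁻¹ ≤ Real.exp (l + 2*l^2) := by
  have h1 : (0:ℝ) < 1 - 2*l := by linarith
  have hu : (0:ℝ) ≤ 2*l + 4*l^2 := by nlinarith
  have key : Real.exp (-(2*l + 4*l^2)) ≤ 1 - 2*l := by
    have h := jl_exp_neg_le hu
    have h3 : l^3 ≤ (1/5)*l^2 := by nlinarith [mul_le_mul_of_nonneg_right hl (sq_nonneg l)]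
    have hsq : l^2 ≤ 1/25 := by nlinarith
    have h4 : l^4 ≤ (1/25)*l^2 := by nlinarith [mul_le_mul_of_nonneg_right hsq (sq_nonneg l)]
    have hq : (2*l+4*l^2)^2 ≤ 8*l^2 := by nlinarith [h3, h4]
    linarith [h, hq]
  have h2 : (1-2*l)⁻¹ ≤ Real.exp (2*l + 4*l^2) := by
    have hpos : (0:ℝ) < Real.exp (-(2*l + 4*l^2)) := Real.exp_pos _
    calc (1-2*l)⁻¹ ≤ (Real.exp (-(2*l + 4*l^2)))⁻¹ := by
          exact inv_anti₀ hpos key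
      _ = Real.exp (2*l + 4*l^2) := by rw [← Real.exp_neg, neg_neg]
  calc Real.sqrt (1-2*l)⁻¹ ≤ Real.sqrt (Real.exp (2*l + 4*l^2)) := Real.sqrt_le_sqrt h2
    _ = Real.exp (l + 2*l^2) := by
        rw [show (2*l + 4*l^2 : ℝ) = 2 * (l + 2*l^2) by ring]
        rw [show Real.exp (2 * (l + 2*l^2)) = Real.exp (l + 2*l^2) ^ (2:ℕ) by
          rw [← Real.exp_nat_mul]; norm_num]
        exact Real.sqrt_sq (Real.exp_pos _).le

/-- MGF bound for the negative exponent (lower tail), via moments -/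
lemma jl_mgf_neg (s : Finset (Fin d)) (hW : ∑ i ∈ s, (x i)^2 = 1)
    {l : ℝ} (hl0 : 0 ≤ l) :
    ∑ σ : Fin d → Bool, Real.exp (-(l * (jlS x s σ)^2))
      ≤ 2^d * Real.exp (-l + 3/2*l^2) := by
  have step1 : ∑ σ : Fin d → Bool, Real.exp (-(l * (jlS x s σ)^2))
      ≤ ∑ σ : Fin d → Bool, (1 - l * (jlS x s σ)^2 + (l * (jlS x s σ)^2)^2/2) := by
    apply Finset.sum_le_sum
    intro σ _
    exact jl_exp_neg_le (by positivity)
  have step2 : ∑ σ : Fin d → Bool, (1 - l * (jlS x s σ)^2 + (l * (jlS x s σ)^2)^2/2)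
      ≤ 2^d * (1 - l + 3/2*l^2) := by
    have e1 : ∀ σ : Fin d → Bool, (1 - l * (jlS x s σ)^2 + (l * (jlS x s σ)^2)^2/2)
        = 1 - l * (jlS x s σ)^2 + (l^2/2) * (jlS x s σ)^4 := by intro σ; ring
    simp only [e1]
    rw [Finset.sum_add_distrib, Finset.sum_sub_distrib, ← Finset.mul_sum, ← Finset.mul_sum,
      jl_m2, hW, Finset.sum_const]
    simp only [Finset.card_univ, Fintype.card_fun, Fintype.card_bool, Fintype.card_fin,
      nsmul_eq_mul, Nat.cast_pow, Nat.cast_ofNat, mul_one]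
    have h4 := jl_m4 x s
    rw [hW] at h4
    have h2n : (0:ℝ) ≤ l^2/2 := by positivity
    nlinarith [mul_le_mul_of_nonneg_left h4 h2n]
  have step3 : (1 - l + 3/2*l^2 : ℝ) ≤ Real.exp (-l + 3/2*l^2) := by
    have := Real.add_one_le_exp (-l + 3/2*l^2)
    linarith
  calc ∑ σ : Fin d → Bool, Real.exp (-(l * (jlS x s σ)^2))
      ≤ 2^d * (1 - l + 3/2*l^2) := le_trans step1 step2
    _ ≤ 2^d * Real.exp (-l + 3/2*l^2) := by
        apply mul_le_mul_of_nonneg_left step3 (by positivity)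


/-- the squared norm statistic -/
def jlQ (σ : Fin d' → Fin d → Bool) : ℝ := ∑ j, (jlS x Finset.univ (σ j))^2

/-- Chernoff counting, upper tail -/
lemma jl_tail_up (hW : ∑ i, (x i)^2 = 1) {ε : ℝ} (hε0 : 0 < ε) (hε1 : ε < 1) :
    ((Finset.univ.filter (fun σ : Fin d' → Fin d → Bool => (1+ε)*d' ≤ jlQ x σ)).card : ℝ)
      ≤ 2^(d*d') * Real.exp (-(3/25) * ε^2 * d') := by
  set l : ℝ := ε/5 with hldef
  have hl0 : 0 ≤ l := by positivity
  have hl5 : l ≤ 1/5 := by rw [hldef]; linarith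
  have hl2 : l < 1/2 := by linarith
  -- Chernoff
  have chern : ((Finset.univ.filter
        (fun σ : Fin d' → Fin d → Bool => (1+ε)*d' ≤ jlQ x σ)).card : ℝ)
        * Real.exp (l * ((1+ε)*d'))
      ≤ ∑ σ : Fin d' → Fin d → Bool, Real.exp (l * jlQ x σ) := by
    have hle : ∑ σ ∈ Finset.univ.filter
          (fun σ : Fin d' → Fin d → Bool => (1+ε)*d' ≤ jlQ x σ), Real.exp (l * ((1+ε)*d'))
        ≤ ∑ σ ∈ Finset.univ.filter
          (fun σ : Fin d' → Fin d → Bool => (1+ε)*d' ≤ jlQ x σ), Real.exp (l * jlQ x σ) := by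
      apply Finset.sum_le_sum
      intro σ hσ
      have := (Finset.mem_filter.mp hσ).2
      exact Real.exp_le_exp.mpr (mul_le_mul_of_nonneg_left this hl0)
    calc ((Finset.univ.filter
          (fun σ : Fin d' → Fin d → Bool => (1+ε)*d' ≤ jlQ x σ)).card : ℝ)
          * Real.exp (l * ((1+ε)*d'))
        = ∑ _σ ∈ Finset.univ.filter
          (fun σ : Fin d' → Fin d → Bool => (1+ε)*d' ≤ jlQ x σ), Real.exp (l * ((1+ε)*d')) := by
          rw [Finset.sum_const, nsmul_eq_mul]
      _ ≤ ∑ σ ∈ Finset.univ.filter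
          (fun σ : Fin d' → Fin d → Bool => (1+ε)*d' ≤ jlQ x σ), Real.exp (l * jlQ x σ) := hle
      _ ≤ ∑ σ : Fin d' → Fin d → Bool, Real.exp (l * jlQ x σ) :=
          Finset.sum_le_sum_of_subset_of_nonneg (Finset.filter_subset _ _)
            (fun σ _ _ => (Real.exp_pos _).le)
  -- product structure
  have hprod : ∑ σ : Fin d' → Fin d → Bool, Real.exp (l * jlQ x σ)
      = (∑ ω : Fin d → Bool, Real.exp (l * (jlS x Finset.univ ω)^2))^(d') := by
    rw [Fintype.sum_pow]
    apply Finset.sum_congr rfl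
    intro σ _
    rw [jlQ, Finset.mul_sum, Real.exp_sum]
  have hmgf := jl_mgf_sq x Finset.univ hW hl0 hl2
  have hexp : (2:ℝ)^d * Real.sqrt (1-2*l)⁻¹ ≤ 2^d * Real.exp (l + 2*l^2) :=
    mul_le_mul_of_nonneg_left (jl_sqrt_bound hl0 hl5) (by positivity)
  have hsum_pos : (0:ℝ) ≤ ∑ ω : Fin d → Bool, Real.exp (l * (jlS x Finset.univ ω)^2) :=
    Finset.sum_nonneg (fun ω _ => (Real.exp_pos _).le)
  have hpow : (∑ ω : Fin d → Bool, Real.exp (l * (jlS x Finset.univ ω)^2))^(d')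
      ≤ ((2:ℝ)^d * Real.exp (l + 2*l^2))^(d') :=
    pow_le_pow_left₀ hsum_pos (le_trans hmgf hexp) d'
  have key : ((Finset.univ.filter
        (fun σ : Fin d' → Fin d → Bool => (1+ε)*d' ≤ jlQ x σ)).card : ℝ)
        * Real.exp (l * ((1+ε)*d'))
      ≤ ((2:ℝ)^d * Real.exp (l + 2*l^2))^(d') := by
    calc _ ≤ ∑ σ : Fin d' → Fin d → Bool, Real.exp (l * jlQ x σ) := chern
      _ = _ := hprod
      _ ≤ _ := hpow
  have hrhs : ((2:ℝ)^d * Real.exp (l + 2*l^2))^(d')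
      = 2^(d*d') * Real.exp ((l + 2*l^2) * d') := by
    rw [mul_pow, ← pow_mul, show Real.exp (l + 2*l^2) ^ d' = Real.exp (d' * (l + 2*l^2)) by
      rw [Real.exp_nat_mul], mul_comm (d':ℝ)]
  rw [hrhs] at key
  have hexp_pos : (0:ℝ) < Real.exp (l * ((1+ε)*d')) := Real.exp_pos _
  have final : ((Finset.univ.filter
        (fun σ : Fin d' → Fin d → Bool => (1+ε)*d' ≤ jlQ x σ)).card : ℝ)
      ≤ 2^(d*d') * Real.exp ((l + 2*l^2) * d') * (Real.exp (l * ((1+ε)*d')))⁻¹ := by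
    rw [← le_div_iff₀ hexp_pos] at key
    simpa [div_eq_mul_inv] using key
  calc ((Finset.univ.filter
        (fun σ : Fin d' → Fin d → Bool => (1+ε)*d' ≤ jlQ x σ)).card : ℝ)
      ≤ 2^(d*d') * Real.exp ((l + 2*l^2) * d') * (Real.exp (l * ((1+ε)*d')))⁻¹ := final
    _ = 2^(d*d') * Real.exp ((l + 2*l^2) * d' - l * ((1+ε)*d')) := by
        rw [← Real.exp_neg, mul_assoc, ← Real.exp_add, sub_eq_add_neg]
    _ = 2^(d*d') * Real.exp (-(3/25) * ε^2 * d') := by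
        have harg : (l + 2*l^2) * (d':ℝ) - l * ((1+ε)*(d':ℝ)) = -(3/25) * ε^2 * (d':ℝ) := by
          rw [hldef]; ring
        rw [harg]
/-- Chernoff counting, lower tail -/
lemma jl_tail_lo (hW : ∑ i, (x i)^2 = 1) {ε : ℝ} (hε0 : 0 < ε) (hε1 : ε < 1) :
    ((Finset.univ.filter (fun σ : Fin d' → Fin d → Bool => jlQ x σ ≤ (1-ε)*d')).card : ℝ)
      ≤ 2^(d*d') * Real.exp (-(1/6) * ε^2 * d') := by
  set l : ℝ := ε/3 with hldef
  have hl0 : 0 ≤ l := by positivity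
  have chern : ((Finset.univ.filter
        (fun σ : Fin d' → Fin d → Bool => jlQ x σ ≤ (1-ε)*d')).card : ℝ)
        * Real.exp (-(l * ((1-ε)*d')))
      ≤ ∑ σ : Fin d' → Fin d → Bool, Real.exp (-(l * jlQ x σ)) := by
    have hle : ∑ σ ∈ Finset.univ.filter
          (fun σ : Fin d' → Fin d → Bool => jlQ x σ ≤ (1-ε)*d'), Real.exp (-(l * ((1-ε)*d')))
        ≤ ∑ σ ∈ Finset.univ.filter
          (fun σ : Fin d' → Fin d → Bool => jlQ x σ ≤ (1-ε)*d'), Real.exp (-(l * jlQ x σ)) := by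
      apply Finset.sum_le_sum
      intro σ hσ
      have := (Finset.mem_filter.mp hσ).2
      exact Real.exp_le_exp.mpr (neg_le_neg (mul_le_mul_of_nonneg_left this hl0))
    calc ((Finset.univ.filter
          (fun σ : Fin d' → Fin d → Bool => jlQ x σ ≤ (1-ε)*d')).card : ℝ)
          * Real.exp (-(l * ((1-ε)*d')))
        = ∑ _σ ∈ Finset.univ.filter
          (fun σ : Fin d' → Fin d → Bool => jlQ x σ ≤ (1-ε)*d'), Real.exp (-(l * ((1-ε)*d'))) := by
          rw [Finset.sum_const, nsmul_eq_mul]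
      _ ≤ ∑ σ ∈ Finset.univ.filter
          (fun σ : Fin d' → Fin d → Bool => jlQ x σ ≤ (1-ε)*d'), Real.exp (-(l * jlQ x σ)) := hle
      _ ≤ ∑ σ : Fin d' → Fin d → Bool, Real.exp (-(l * jlQ x σ)) :=
          Finset.sum_le_sum_of_subset_of_nonneg (Finset.filter_subset _ _)
            (fun σ _ _ => (Real.exp_pos _).le)
  have hprod : ∑ σ : Fin d' → Fin d → Bool, Real.exp (-(l * jlQ x σ))
      = (∑ ω : Fin d → Bool, Real.exp (-(l * (jlS x Finset.univ ω)^2)))^(d') := by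
    rw [Fintype.sum_pow]
    apply Finset.sum_congr rfl
    intro σ _
    rw [jlQ, Finset.mul_sum, ← Finset.sum_neg_distrib, Real.exp_sum]
  have hmgf := jl_mgf_neg x Finset.univ hW hl0
  have hsum_pos : (0:ℝ) ≤ ∑ ω : Fin d → Bool, Real.exp (-(l * (jlS x Finset.univ ω)^2)) :=
    Finset.sum_nonneg (fun ω _ => (Real.exp_pos _).le)
  have hpow : (∑ ω : Fin d → Bool, Real.exp (-(l * (jlS x Finset.univ ω)^2)))^(d')
      ≤ ((2:ℝ)^d * Real.exp (-l + 3/2*l^2))^(d') :=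
    pow_le_pow_left₀ hsum_pos hmgf d'
  have hrhs : ((2:ℝ)^d * Real.exp (-l + 3/2*l^2))^(d')
      = 2^(d*d') * Real.exp ((-l + 3/2*l^2) * d') := by
    rw [mul_pow, ← pow_mul, show Real.exp (-l + 3/2*l^2) ^ d' = Real.exp (d' * (-l + 3/2*l^2)) by
      rw [Real.exp_nat_mul], mul_comm (d':ℝ)]
  have key : ((Finset.univ.filter
        (fun σ : Fin d' → Fin d → Bool => jlQ x σ ≤ (1-ε)*d')).card : ℝ)
        * Real.exp (-(l * ((1-ε)*d')))
      ≤ 2^(d*d') * Real.exp ((-l + 3/2*l^2) * d') := by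
    calc _ ≤ ∑ σ : Fin d' → Fin d → Bool, Real.exp (-(l * jlQ x σ)) := chern
      _ = _ := hprod
      _ ≤ _ := hpow
      _ = _ := hrhs
  have hexp_pos : (0:ℝ) < Real.exp (-(l * ((1-ε)*d'))) := Real.exp_pos _
  have final : ((Finset.univ.filter
        (fun σ : Fin d' → Fin d → Bool => jlQ x σ ≤ (1-ε)*d')).card : ℝ)
      ≤ 2^(d*d') * Real.exp ((-l + 3/2*l^2) * d') * (Real.exp (-(l * ((1-ε)*d'))))⁻¹ := by
    rw [← le_div_iff₀ hexp_pos] at key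
    simpa [div_eq_mul_inv] using key
  calc ((Finset.univ.filter
        (fun σ : Fin d' → Fin d → Bool => jlQ x σ ≤ (1-ε)*d')).card : ℝ)
      ≤ 2^(d*d') * Real.exp ((-l + 3/2*l^2) * d') * (Real.exp (-(l * ((1-ε)*d'))))⁻¹ := final
    _ = 2^(d*d') * Real.exp ((-l + 3/2*l^2) * d' + (l * ((1-ε)*d'))) := by
        rw [← Real.exp_neg, neg_neg, mul_assoc, ← Real.exp_add]
    _ = 2^(d*d') * Real.exp (-(1/6) * ε^2 * d') := by
        have harg : (-l + 3/2*l^2) * (d':ℝ) + (l * ((1-ε)*(d':ℝ)))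
            = -(1/6) * ε^2 * (d':ℝ) := by
          rw [hldef]; ring
        rw [harg]

lemma jlS_smul (c : ℝ) (y : Fin d → ℝ) (s : Finset (Fin d)) (ω : Fin d → Bool) :
    jlS (fun i => c * y i) s ω = c * jlS y s ω := by
  unfold jlS; rw [Finset.mul_sum]; exact Finset.sum_congr rfl (fun i _ => by ring)

lemma jlQ_smul (c : ℝ) (y : Fin d → ℝ) (σ : Fin d' → Fin d → Bool) :
    jlQ (fun i => c * y i) σ = c^2 * jlQ y σ := by
  unfold jlQ; rw [Finset.mul_sum]
  exact Finset.sum_congr rfl (fun j _ => by rw [jlS_smul]; ring)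

lemma jl_norm_sq {m : ℕ} (v : EuclideanSpace ℝ (Fin m)) : ‖v‖^2 = ∑ i, (v i)^2 := by
  rw [EuclideanSpace.norm_eq, Real.sq_sqrt (by positivity)]
  exact Finset.sum_congr rfl (fun i _ => by rw [Real.norm_eq_abs, sq_abs])

/-- the random projection as a linear map -/
def jlmap (σ : Fin d' → Fin d → Bool) (r : ℝ) :
    EuclideanSpace ℝ (Fin d) →ₗ[ℝ] EuclideanSpace ℝ (Fin d') where
  toFun := fun v => WithLp.toLp 2 fun j => r * ∑ i, jlsgn (σ j i) * v i
  map_add' := by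
    intro v w
    ext j
    simp only [PiLp.add_apply, PiLp.toLp_apply]
    rw [show ∑ i, jlsgn (σ j i) * (v i + w i)
      = ∑ i, jlsgn (σ j i) * v i + ∑ i, jlsgn (σ j i) * w i by
        rw [← Finset.sum_add_distrib]; exact Finset.sum_congr rfl (fun i _ => by ring)]
    ring
  map_smul' := by
    intro c v
    ext j
    simp only [PiLp.toLp_apply, PiLp.smul_apply, smul_eq_mul, RingHom.id_apply]
    rw [show ∑ i, jlsgn (σ j i) * (c * v i) = c * ∑ i, jlsgn (σ j i) * v i by
      rw [Finset.mul_sum]; exact Finset.sum_congr rfl (fun i _ => by ring)]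
    ring

lemma jlmap_norm (σ : Fin d' → Fin d → Bool) {r : ℝ} (hr : 0 ≤ r)
    (v : EuclideanSpace ℝ (Fin d)) :
    ‖jlmap σ r v‖ = r * Real.sqrt (jlQ (fun i => v i) σ) := by
  have h1 : ‖jlmap σ r v‖^2 = ∑ j, ((jlmap σ r v) j)^2 := jl_norm_sq _
  have h2 : ∀ j, (jlmap σ r v) j = r * jlS (fun i => v i) Finset.univ (σ j) := fun j => rfl
  have h3 : ‖jlmap σ r v‖^2 = r^2 * jlQ (fun i => v i) σ := by
    rw [h1]
    simp only [h2]
    rw [jlQ, Finset.mul_sum]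
    exact Finset.sum_congr rfl (fun j _ => by ring)
  have h4 : ‖jlmap σ r v‖ = Real.sqrt (r^2 * jlQ (fun i => v i) σ) := by
    rw [← h3, Real.sqrt_sq (norm_nonneg _)]
  rw [h4, Real.sqrt_mul (sq_nonneg r), Real.sqrt_sq hr]

end JLaux

set_option maxHeartbeats 1000000 in
/-- the (deterministic, existential form of the) Johnson–Lindenstrauss lemma. -/
theorem statement14 : ∃ C : ℝ, 0 < C ∧
    ∀ (n : ℕ), 2 ≤ n → ∀ ε : ℝ, ε ∈ Set.Ioo (0:ℝ) 1 →
      ∀ (d : ℕ) (X : Finset (EuclideanSpace ℝ (Fin d))), X.card = n →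
      ∃ (d' : ℕ) (f : EuclideanSpace ℝ (Fin d) →ₗ[ℝ] EuclideanSpace ℝ (Fin d')),
        d' ≤ ⌈C * ε⁻¹ ^ 2 * Real.log (n : ℝ)⌉₊ ∧
        ∀ p ∈ X, ∀ q ∈ X,
          (1 - ε) * ‖p - q‖ ≤ ‖f p - f q‖ ∧ ‖f p - f q‖ ≤ (1 + ε) * ‖p - q‖ := by
  refine ⟨27, by norm_num, ?_⟩
  intro n hn ε hε d X hX
  obtain ⟨hε0, hε1⟩ := hε
  set d' : ℕ := ⌈(27:ℝ) * ε⁻¹ ^ 2 * Real.log n⌉₊ with hd'def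
  have hn2 : (2:ℝ) ≤ n := by exact_mod_cast hn
  have hnR : (0:ℝ) < n := by linarith
  have hlog : 0 < Real.log n := Real.log_pos (by linarith)
  have hcpos : 0 < (27:ℝ) * ε⁻¹ ^ 2 * Real.log n := by positivity
  have hd'pos : 0 < d' := Nat.ceil_pos.mpr hcpos
  have hd'ge : (27:ℝ) * ε⁻¹ ^ 2 * Real.log n ≤ d' := Nat.le_ceil _
  have hεd : 27 * Real.log n ≤ ε^2 * d' := by
    have h2 : ε^2 * ((27:ℝ) * ε⁻¹ ^ 2 * Real.log n) = 27 * Real.log n := by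
      field_simp
    calc 27 * Real.log n = ε^2 * ((27:ℝ) * ε⁻¹ ^ 2 * Real.log n) := h2.symm
      _ ≤ ε^2 * d' := mul_le_mul_of_nonneg_left hd'ge (sq_nonneg ε)
  -- tail bounds
  have hn3 : Real.exp (-(3 * Real.log n)) ≤ 1/(2*(n:ℝ)^2) := by
    have e1 : Real.exp (-(3 * Real.log n)) = ((n:ℝ)⁻¹)^3 := by
      rw [show -(3 * Real.log n) = (3:ℕ) * (-Real.log n) by push_cast; ring,
        Real.exp_nat_mul, Real.exp_neg, Real.exp_log hnR]
    rw [e1]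
    rw [inv_pow, inv_eq_one_div, div_le_div_iff₀ (by positivity) (by positivity)]
    nlinarith [hn2, hnR]
  have htail_up : Real.exp (-(3/25) * ε^2 * (d':ℝ)) ≤ 1/(2*(n:ℝ)^2) := by
    refine le_trans (Real.exp_le_exp.mpr ?_) hn3
    nlinarith [hεd, hlog]
  have htail_lo : Real.exp (-(1/6) * ε^2 * (d':ℝ)) ≤ 1/(2*(n:ℝ)^2) := by
    refine le_trans (Real.exp_le_exp.mpr ?_) hn3
    nlinarith [hεd, hlog]
  -- unit vectors for pairs
  let uvec : EuclideanSpace ℝ (Fin d) × EuclideanSpace ℝ (Fin d) → (Fin d → ℝ) :=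
    fun pq i => (pq.1 - pq.2) i / ‖pq.1 - pq.2‖
  set P : Finset (EuclideanSpace ℝ (Fin d) × EuclideanSpace ℝ (Fin d)) :=
    (X ×ˢ X).filter (fun pq => pq.1 ≠ pq.2) with hPdef
  have hunit : ∀ pq ∈ P, ∑ i, (uvec pq i)^2 = 1 := by
    intro pq hpq
    have hne : pq.1 ≠ pq.2 := (Finset.mem_filter.mp hpq).2
    have hw : pq.1 - pq.2 ≠ 0 := sub_ne_zero.mpr hne
    have hnw : 0 < ‖pq.1 - pq.2‖ := norm_pos_iff.mpr hw
    have : ∑ i, (uvec pq i)^2 = (∑ i, ((pq.1 - pq.2) i)^2) / ‖pq.1 - pq.2‖^2 := by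
      rw [Finset.sum_div]
      exact Finset.sum_congr rfl (fun i _ => by rw [div_pow])
    rw [this, ← jl_norm_sq, div_self (by positivity)]
  -- bad events
  let Bad : EuclideanSpace ℝ (Fin d) × EuclideanSpace ℝ (Fin d)
      → Finset (Fin d' → Fin d → Bool) := fun pq =>
    Finset.univ.filter (fun σ => jlQ (uvec pq) σ ≤ (1-ε)*d' ∨ (1+ε)*d' ≤ jlQ (uvec pq) σ)
  have hbadcard : ∀ pq ∈ P, ((Bad pq).card : ℝ) ≤ 2^(d*d') / (n:ℝ)^2 := by
    intro pq hpq
    have hsub : Bad pq ⊆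
        (Finset.univ.filter (fun σ : Fin d' → Fin d → Bool => jlQ (uvec pq) σ ≤ (1-ε)*d'))
        ∪ (Finset.univ.filter (fun σ : Fin d' → Fin d → Bool => (1+ε)*d' ≤ jlQ (uvec pq) σ)) := by
      intro σ hσ
      rw [Finset.mem_union, Finset.mem_filter, Finset.mem_filter]
      rcases (Finset.mem_filter.mp hσ).2 with h | h
      · exact Or.inl ⟨Finset.mem_univ _, h⟩
      · exact Or.inr ⟨Finset.mem_univ _, h⟩
    have h1 := jl_tail_lo (d' := d') (uvec pq) (hunit pq hpq) hε0 hε1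
    have h2 := jl_tail_up (d' := d') (uvec pq) (hunit pq hpq) hε0 hε1
    calc ((Bad pq).card : ℝ)
        ≤ ((Finset.univ.filter (fun σ : Fin d' → Fin d → Bool =>
              jlQ (uvec pq) σ ≤ (1-ε)*d')).card : ℝ)
          + ((Finset.univ.filter (fun σ : Fin d' → Fin d → Bool =>
              (1+ε)*d' ≤ jlQ (uvec pq) σ)).card : ℝ) := by
          have := Finset.card_le_card hsub
          have h3 := Finset.card_union_le
            (Finset.univ.filter (fun σ : Fin d' → Fin d → Bool => jlQ (uvec pq) σ ≤ (1-ε)*d'))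
            (Finset.univ.filter (fun σ : Fin d' → Fin d → Bool => (1+ε)*d' ≤ jlQ (uvec pq) σ))
          exact_mod_cast le_trans this h3
      _ ≤ 2^(d*d') * Real.exp (-(1/6) * ε^2 * d') + 2^(d*d') * Real.exp (-(3/25) * ε^2 * d') :=
          add_le_add h1 h2
      _ ≤ 2^(d*d') * (1/(2*(n:ℝ)^2)) + 2^(d*d') * (1/(2*(n:ℝ)^2)) := by
          have hp : (0:ℝ) ≤ 2^(d*d') := by positivity
          exact add_le_add (mul_le_mul_of_nonneg_left htail_lo hp)
            (mul_le_mul_of_nonneg_left htail_up hp)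
      _ = 2^(d*d') / (n:ℝ)^2 := by field_simp; ring
  -- existence of a good sign matrix
  have hPlt : (P.card : ℝ) < (n:ℝ)^2 := by
    have hP_sub : P ⊆ X ×ˢ X := Finset.filter_subset _ _
    obtain ⟨x0, hx0⟩ := Finset.card_pos.mp (show 0 < X.card by rw [hX]; omega)
    have hdiag : (x0, x0) ∈ X ×ˢ X := Finset.mk_mem_product hx0 hx0
    have hnotP : (x0, x0) ∉ P := by
      rw [hPdef, Finset.mem_filter]
      push_neg
      intro _
      rfl
    have hss : P ⊂ X ×ˢ X := ⟨hP_sub, fun hsub => hnotP (hsub hdiag)⟩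
    have := Finset.card_lt_card hss
    rw [Finset.card_product, hX] at this
    have : (P.card : ℝ) < (n:ℝ) * n := by exact_mod_cast this
    nlinarith [this]
  have hcard_univ : ((Finset.univ : Finset (Fin d' → Fin d → Bool)).card : ℝ) = 2^(d*d') := by
    rw [Finset.card_univ, Fintype.card_fun]
    rw [show Fintype.card (Fin d → Bool) = 2^d by rw [Fintype.card_fun]; simp]
    rw [Fintype.card_fin]
    push_cast
    rw [← pow_mul]
  obtain ⟨σ, hσ⟩ : ∃ σ : Fin d' → Fin d → Bool, σ ∉ P.biUnion Bad := by
    by_contra hcon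
    push_neg at hcon
    have huniv : (Finset.univ : Finset (Fin d' → Fin d → Bool)) ⊆ P.biUnion Bad :=
      fun σ _ => hcon σ
    have hcard := Finset.card_le_card huniv
    have hbcard : ((P.biUnion Bad).card : ℝ) < 2^(d*d') := by
      calc ((P.biUnion Bad).card : ℝ)
          ≤ ∑ pq ∈ P, ((Bad pq).card : ℝ) := by
            exact_mod_cast Finset.card_biUnion_le
        _ ≤ ∑ _pq ∈ P, (2^(d*d') / (n:ℝ)^2) := Finset.sum_le_sum hbadcard
        _ = (P.card : ℝ) * (2^(d*d') / (n:ℝ)^2) := by rw [Finset.sum_const, nsmul_eq_mul]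
        _ < (n:ℝ)^2 * (2^(d*d') / (n:ℝ)^2) := by
            apply mul_lt_mul_of_pos_right hPlt
            positivity
        _ = 2^(d*d') := by field_simp
    rw [← hcard_univ] at hbcard
    have := lt_of_le_of_lt (Nat.cast_le.mpr hcard : ((Finset.univ :
      Finset (Fin d' → Fin d → Bool)).card : ℝ) ≤ _) hbcard
    exact lt_irrefl _ this
  have hgood : ∀ pq ∈ P, (1-ε)*d' < jlQ (uvec pq) σ ∧ jlQ (uvec pq) σ < (1+ε)*d' := by
    intro pq hpq
    have : σ ∉ Bad pq := fun hmem => hσ (Finset.mem_biUnion.mpr ⟨pq, hpq, hmem⟩)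
    rw [Finset.mem_filter] at this
    push_neg at this
    exact this (Finset.mem_univ _)
  -- the linear map
  set r : ℝ := (Real.sqrt d')⁻¹ with hrdef
  have hrpos : 0 < r := by
    rw [hrdef]
    have : (0:ℝ) < Real.sqrt d' := Real.sqrt_pos.mpr (by exact_mod_cast hd'pos)
    positivity
  let fmap := jlmap σ r
  have hfnorm : ∀ v : EuclideanSpace ℝ (Fin d),
      ‖fmap v‖ = r * Real.sqrt (jlQ (fun i => v i) σ) := fun v => jlmap_norm σ hrpos.le v
  refine ⟨d', fmap, le_refl _, ?_⟩
  intro p hp q hq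
  by_cases hpq : p = q
  · subst hpq
    simp
  · have hPmem : (p, q) ∈ P := by
      rw [hPdef, Finset.mem_filter]
      exact ⟨Finset.mk_mem_product hp hq, hpq⟩
    obtain ⟨hlo, hup⟩ := hgood (p, q) hPmem
    have hw : p - q ≠ 0 := sub_ne_zero.mpr hpq
    have hnw : 0 < ‖p - q‖ := norm_pos_iff.mpr hw
    have hvu : ∀ i : Fin d, (p - q) i = ‖p - q‖ * uvec (p, q) i := by
      intro i
      show (p - q) i = ‖p - q‖ * ((p - q) i / ‖p - q‖)
      field_simp
    have hQscale : jlQ (fun i => (p - q) i) σ = ‖p - q‖^2 * jlQ (uvec (p, q)) σ := by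
      rw [show (fun i => (p - q) i) = fun i => ‖p - q‖ * uvec (p, q) i from funext hvu]
      exact jlQ_smul _ _ _
    have hfs : fmap p - fmap q = fmap (p - q) := (map_sub fmap p q).symm
    have hnf : ‖fmap p - fmap q‖ = r * (‖p - q‖ * Real.sqrt (jlQ (uvec (p, q)) σ)) := by
      rw [hfs, hfnorm, hQscale, Real.sqrt_mul (by positivity), Real.sqrt_sq hnw.le]
    have hQnonneg : 0 ≤ jlQ (uvec (p, q)) σ :=
      Finset.sum_nonneg (fun j _ => sq_nonneg _)
    have hrd : r * Real.sqrt d' = 1 := by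
      rw [hrdef]
      exact inv_mul_cancel₀ (ne_of_gt (Real.sqrt_pos.mpr (by exact_mod_cast hd'pos)))
    have hd'R : (0:ℝ) < (d':ℝ) := by exact_mod_cast hd'pos
    constructor
    · -- lower bound
      have h1 : Real.sqrt ((1-ε) * d') ≤ Real.sqrt (jlQ (uvec (p, q)) σ) :=
        Real.sqrt_le_sqrt hlo.le
      have h2 : Real.sqrt ((1-ε) * d') = Real.sqrt (1-ε) * Real.sqrt d' :=
        Real.sqrt_mul (by linarith) _
      have h3 : (1-ε) ≤ Real.sqrt (1-ε) := by
        have := Real.sqrt_le_sqrt (show (1-ε)^2 ≤ (1-ε) by nlinarith)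
        rwa [Real.sqrt_sq (by linarith)] at this
      calc (1-ε) * ‖p - q‖ ≤ Real.sqrt (1-ε) * ‖p - q‖ :=
            mul_le_mul_of_nonneg_right h3 hnw.le
        _ = r * (‖p - q‖ * (Real.sqrt (1-ε) * Real.sqrt d')) := by
            linear_combination (-(Real.sqrt (1-ε) * ‖p - q‖)) * hrd
        _ = r * (‖p - q‖ * Real.sqrt ((1-ε) * d')) := by rw [h2]
        _ ≤ r * (‖p - q‖ * Real.sqrt (jlQ (uvec (p, q)) σ)) := by
            apply mul_le_mul_of_nonneg_left _ hrpos.le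
            exact mul_le_mul_of_nonneg_left h1 hnw.le
        _ = ‖fmap p - fmap q‖ := hnf.symm
    · -- upper bound
      have h1 : Real.sqrt (jlQ (uvec (p, q)) σ) ≤ Real.sqrt ((1+ε) * d') :=
        Real.sqrt_le_sqrt hup.le
      have h2 : Real.sqrt ((1+ε) * d') = Real.sqrt (1+ε) * Real.sqrt d' :=
        Real.sqrt_mul (by linarith) _
      have h3 : Real.sqrt (1+ε) ≤ 1+ε := by
        have := Real.sqrt_le_sqrt (show (1+ε) ≤ (1+ε)^2 by nlinarith)
        rwa [Real.sqrt_sq (by linarith)] at this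
      calc ‖fmap p - fmap q‖ = r * (‖p - q‖ * Real.sqrt (jlQ (uvec (p, q)) σ)) := hnf
        _ ≤ r * (‖p - q‖ * Real.sqrt ((1+ε) * d')) := by
            apply mul_le_mul_of_nonneg_left _ hrpos.le
            exact mul_le_mul_of_nonneg_left h1 hnw.le
        _ = r * (‖p - q‖ * (Real.sqrt (1+ε) * Real.sqrt d')) := by rw [h2]
        _ = Real.sqrt (1+ε) * ‖p - q‖ := by
            linear_combination (Real.sqrt (1+ε) * ‖p - q‖) * hrd
        _ ≤ (1+ε) * ‖p - q‖ := mul_le_mul_of_nonneg_right h3 hnw.le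

end
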